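/- For the sigmoid s(x) = 1/(1+e^{-λx}) with λ > 0 and any d > 0 and n ≥ 2: if s(-γ d) = 1/n^8 for some γ > 0, then for any ε ∈ (0,1], s(-εγd/10) ≥ (1/e) · (1/n^8)^{ε/5}. (Lower bound on the noise probability at a scaled-down deficit.) -/

import Mathlib

/-- If `s(-γ d) = 1/n^8` then for any `ε ∈ (0,1]`,
`s(-ε γ d / 10) ≥ (1/e) * (1/n^8)^(ε/5)`. -/
theorem sigmoid_scaled_noise_lower_bound (lam : ℝ) (hlam : 0 < lam)
    (s : ℝ → ℝ) (hs : ∀ x, s x = 1 / (1 + Real.exp (-lam * x)))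
    (d : ℝ) (hd : 0 < d) (n : ℕ) (hn : 2 ≤ n)
    (γ : ℝ) (hγ : 0 < γ) (hcrit : s (-(γ * d)) = 1 / (n : ℝ) ^ 8)
    (ε : ℝ) (hε0 : 0 < ε) (hε1 : ε ≤ 1) :
    (1 / Real.exp 1) * (1 / (n : ℝ) ^ 8) ^ (ε / 5) ≤ s (-(ε * γ * d / 10)) := by
  have hn2 : (2:ℝ) ≤ (n:ℝ) := by exact_mod_cast hn
  set t : ℝ := lam * (γ * d) with ht
  have htpos : 0 < t := by positivity
  have hNpos : (0:ℝ) < (n:ℝ)^8 := by positivity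
  have hN1 : (1:ℝ) ≤ (n:ℝ)^8 := one_le_pow₀ (by linarith)
  -- from the critical equation: 1 + exp t = n^8
  have hkey : 1 + Real.exp t = (n:ℝ)^8 := by
    have h := hcrit
    rw [hs] at h
    have harg : -lam * -(γ * d) = t := by ring
    rw [harg] at h
    have hpos : (0:ℝ) < 1 + Real.exp t := by positivity
    field_simp at h
    linarith
  rw [hs]
  have harg : -lam * -(ε * γ * d / 10) = (ε/10) * t := by ring
  rw [harg]
  set X : ℝ := ((n:ℝ)^8) ^ (ε/5) with hX
  have hX1 : (1:ℝ) ≤ X := Real.one_le_rpow hN1 (by positivity)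
  have hE : Real.exp ((ε/10)*t) ≤ X := by
    have h1 : Real.exp ((ε/10)*t) = (Real.exp t) ^ (ε/10) := by
      rw [← Real.exp_mul]; ring_nf
    have h2 : (Real.exp t) ^ (ε/10) ≤ ((n:ℝ)^8) ^ (ε/10) := by
      apply Real.rpow_le_rpow (le_of_lt (Real.exp_pos t)) _ (by positivity)
      linarith [Real.exp_pos t]
    have h3 : ((n:ℝ)^8) ^ (ε/10) ≤ ((n:ℝ)^8) ^ (ε/5) :=
      Real.rpow_le_rpow_of_exponent_le hN1 (by linarith)
    calc Real.exp ((ε/10)*t) = (Real.exp t) ^ (ε/10) := h1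
      _ ≤ ((n:ℝ)^8) ^ (ε/10) := h2
      _ ≤ X := h3
  have he2 : (2:ℝ) ≤ Real.exp 1 := by
    have := Real.add_one_le_exp 1; linarith
  have hrhs : (1 / Real.exp 1) * (1 / (n:ℝ)^8) ^ (ε/5) = 1 / (Real.exp 1 * X) := by
    rw [one_div ((n:ℝ)^8), Real.inv_rpow (le_of_lt hNpos)]
    field_simp
    exact hX
  rw [hrhs]
  apply one_div_le_one_div_of_le (by positivity)
  nlinarith [Real.exp_pos ((ε/10)*t)]
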